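/- Let β : ℝ² × ℝ → ((ℝ²) →L[ℝ] ℝ) and F : ℝ² × ℝ → ℝ be continuously differentiable, and suppose that for every (x,t) ∈ ℝ² × ℝ the derivative of β at (x,t) in the direction (0,1) equals the derivative of the map x' ↦ F(x',t) at x (both as continuous linear functionals on ℝ²). Define the 1-form γ on ℝ² × ℝ by γ_{(x,t)}(u,s) = β(x,t)(u) + F(x,t)·s. Then for every point p and every u ∈ ℝ², dγ_p((u,0),(0,1)) = 0. (Thus for the contact form α = f_t dt + β_t with ∂β_t/∂t = d_S f_t, the 2-form dα has no dt-component, i.e. dα = d_S β_t = ω, so the Reeb vector field is parallel to ∂_t.) -/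

import Mathlib

/-- Key computation in the proof of Lemma 2.3: if `γ = β_t + F dt` is a 1-form on
`ℝ² × ℝ` with `∂β_t/∂t = d_S F`, then the 2-form `dγ` vanishes on pairs
`((u,0), (0,1))`, i.e. `dγ` has no `dt`-component. -/
theorem d_alpha_has_no_dt_component
    (β : (ℝ × ℝ) × ℝ → ((ℝ × ℝ) →L[ℝ] ℝ)) (F : (ℝ × ℝ) × ℝ → ℝ)
    (hβ : ContDiff ℝ 1 β) (hF : ContDiff ℝ 1 F)
    (hcompat : ∀ (x : ℝ × ℝ) (t : ℝ),
      fderiv ℝ β (x, t) (((0 : ℝ × ℝ)), (1 : ℝ)) = fderiv ℝ (fun x' => F (x', t)) x)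
    (γ : (ℝ × ℝ) × ℝ → (((ℝ × ℝ) × ℝ) →L[ℝ] ℝ))
    (hγ : ∀ p (u : ℝ × ℝ) (s : ℝ), γ p (u, s) = β p u + F p * s)
    (dγ : ((ℝ × ℝ) × ℝ) → ((ℝ × ℝ) × ℝ) → ((ℝ × ℝ) × ℝ) → ℝ)
    (hdγ : ∀ p u v, dγ p u v = (fderiv ℝ γ p u) v - (fderiv ℝ γ p v) u)
    (p : (ℝ × ℝ) × ℝ) (u : ℝ × ℝ) :
    dγ p (u, (0 : ℝ)) (((0 : ℝ × ℝ)), (1 : ℝ)) = 0 := by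
  set fst := ContinuousLinearMap.fst ℝ (ℝ × ℝ) ℝ
  set snd := ContinuousLinearMap.snd ℝ (ℝ × ℝ) ℝ
  set T : ((ℝ × ℝ) →L[ℝ] ℝ) →L[ℝ] (((ℝ × ℝ) × ℝ) →L[ℝ] ℝ) :=
    (ContinuousLinearMap.compL ℝ ((ℝ × ℝ) × ℝ) (ℝ × ℝ) ℝ).flip fst
  have hγeq : γ = fun q => T (β q) + F q • snd := by
    funext q
    apply ContinuousLinearMap.ext
    intro v
    have := hγ q v.1 v.2
    simpa [T, fst, snd, ContinuousLinearMap.compL] using this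
  have hβd : ∀ q, HasFDerivAt β (fderiv ℝ β q) q :=
    fun q => (hβ.differentiable one_ne_zero q).hasFDerivAt
  have hFd : ∀ q, HasFDerivAt F (fderiv ℝ F q) q :=
    fun q => (hF.differentiable one_ne_zero q).hasFDerivAt
  have hγd : HasFDerivAt γ
      (T.comp (fderiv ℝ β p) + (fderiv ℝ F p).smulRight snd) p := by
    rw [hγeq]
    have h1 : HasFDerivAt (fun q => T (β q)) (T.comp (fderiv ℝ β p)) p :=
      T.hasFDerivAt.comp p (hβd p)
    have h2 : HasFDerivAt (fun q => F q • snd)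
        ((fderiv ℝ F p).smulRight snd) p := by
      have := (hFd p).smul (hasFDerivAt_const snd p)
      rw [smul_zero, zero_add] at this; exact this
    exact h1.add h2
  have hfd : fderiv ℝ γ p = T.comp (fderiv ℝ β p) + (fderiv ℝ F p).smulRight snd :=
    hγd.fderiv
  -- derivative of x' ↦ F (x', p.2)
  have hinl : HasFDerivAt (fun x' : ℝ × ℝ => F (x', p.2))
      ((fderiv ℝ F p).comp ((ContinuousLinearMap.id ℝ (ℝ × ℝ)).prod 0)) p.1 := by
    have h0 : HasFDerivAt (fun x' : ℝ × ℝ => (x', p.2))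
        ((ContinuousLinearMap.id ℝ (ℝ × ℝ)).prod 0) p.1 :=
      (hasFDerivAt_id p.1).prodMk (hasFDerivAt_const p.2 p.1)
    have := (hFd p).comp p.1 (by simpa using h0)
    exact this
  have hF2 : fderiv ℝ (fun x' : ℝ × ℝ => F (x', p.2)) p.1 u = fderiv ℝ F p (u, 0) := by
    rw [hinl.fderiv]
    simp
  have hc := hcompat p.1 p.2
  rw [hdγ, hfd]
  simp only [ContinuousLinearMap.add_apply, ContinuousLinearMap.coe_comp',
    Function.comp_apply, ContinuousLinearMap.smulRight_apply]
  have hTeval : ∀ (L : (ℝ × ℝ) →L[ℝ] ℝ) (v : (ℝ × ℝ) × ℝ), T L v = L v.1 := fun L v => rfl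
  rw [hTeval, hTeval]
  have hc' : fderiv ℝ β p ((0 : ℝ × ℝ), (1 : ℝ)) u
      = fderiv ℝ F p (u, 0) := by
    have : fderiv ℝ β (p.1, p.2) ((0 : ℝ × ℝ), (1 : ℝ)) = fderiv ℝ (fun x' => F (x', p.2)) p.1 := hc
    rw [← hF2, ← this]
  simp only [snd] at *
  simp [hc']
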